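/- Fix ε ≠ 0. For q > 1 define Y_n(q) = ε^{−n} · q^{−1/(2ε)} · (q² − 1)^{1/(2ε)} · Z_n(q), where the real powers of the positive quantities q and q² − 1 are taken. Then for every natural number n and every q > 1, Y_{n+1}(q) = (q² − 1) · Y_n'(q). -/

import Mathlib

/-- The discrete stochastic process with memory: binomial transfer probabilities
with coupling `ε`. -/
noncomputable def P (ε : ℝ) : ℕ → ℤ → ℝ
  | 0, x => if x = 0 then 1 else 0
  | n + 1, x =>
      P ε n (x + 1) * (1 / 2 - ((x : ℝ) + 1) * ε) +
      P ε n (x - 1) * (1 / 2 + ((x : ℝ) - 1) * ε)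

/-- The generating function `Z_n(q) = Σ_{x ∈ ℤ} P(n, x) · q^x` (integer powers). -/
noncomputable def Z (ε : ℝ) (n : ℕ) (q : ℝ) : ℝ := ∑' x : ℤ, P ε n x * q ^ x

/-- The substituted function `Y_n(q) = ε^{−n} · q^{−1/(2ε)} · (q² − 1)^{1/(2ε)} · Z_n(q)`,
with real powers of the positive quantities `q` and `q² − 1` (for `q > 1`). -/
noncomputable def Y (ε : ℝ) (n : ℕ) (q : ℝ) : ℝ :=
  ε ^ (-(n : ℤ)) * q ^ (-(1 / (2 * ε))) * (q ^ 2 - 1) ^ (1 / (2 * ε)) * Z ε n q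

lemma P_succ (ε : ℝ) (n : ℕ) (x : ℤ) :
    P ε (n+1) x = P ε n (x + 1) * (1 / 2 - ((x : ℝ) + 1) * ε) +
      P ε n (x - 1) * (1 / 2 + ((x : ℝ) - 1) * ε) := rfl

lemma P_supp (ε : ℝ) : ∀ (n : ℕ) (x : ℤ), (x < -(n:ℤ) ∨ (n:ℤ) < x) → P ε n x = 0 := by
  intro n
  induction n with
  | zero => intro x hx; simp only [P]; rw [if_neg (by omega)]
  | succ n ih =>
    intro x hx
    rw [P_succ, ih (x+1) (by push_cast at hx ⊢; omega), ih (x-1) (by push_cast at hx ⊢; omega)]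
    ring

lemma Z_eq_sum (ε : ℝ) (n : ℕ) (q : ℝ) :
    Z ε n q = ∑ x ∈ Finset.Icc (-(n:ℤ)) (n:ℤ), P ε n x * q ^ x := by
  refine tsum_eq_sum ?_
  intro x hx
  rw [Finset.mem_Icc] at hx
  rw [P_supp ε n x (by omega)]
  ring

lemma Z_hasDeriv (ε : ℝ) (n : ℕ) (q : ℝ) (hq : q ≠ 0) :
    HasDerivAt (Z ε n)
      (∑ x ∈ Finset.Icc (-(n:ℤ)) (n:ℤ), P ε n x * ((x:ℝ) * q ^ (x-1))) q := by
  have h : Z ε n = fun q => ∑ x ∈ Finset.Icc (-(n:ℤ)) (n:ℤ), P ε n x * q ^ x :=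
    funext fun q => Z_eq_sum ε n q
  rw [h]
  exact HasDerivAt.fun_sum fun x _ => (hasDerivAt_zpow x q (Or.inl hq)).const_mul _

lemma shift_sum (ε : ℝ) (n : ℕ) (c : ℤ) (hc1 : -1 ≤ c) (hc2 : c ≤ 1) (f : ℤ → ℝ) :
    ∑ x ∈ Finset.Icc (-(n:ℤ)-1) ((n:ℤ)+1), P ε n (x + c) * f (x + c)
      = ∑ y ∈ Finset.Icc (-(n:ℤ)) ((n:ℤ)), P ε n y * f y := by
  have h1 : ∑ x ∈ Finset.Icc (-(n:ℤ)-1) ((n:ℤ)+1), P ε n (x + c) * f (x + c)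
      = ∑ y ∈ Finset.Icc (-(n:ℤ)-1+c) ((n:ℤ)+1+c), P ε n y * f y := by
    rw [← Finset.map_add_right_Icc, Finset.sum_map]
    simp
  rw [h1]
  symm
  apply Finset.sum_subset_zero_on_sdiff
  · apply Finset.Icc_subset_Icc <;> omega
  · intro y hy
    simp only [Finset.mem_sdiff, Finset.mem_Icc] at hy
    rw [P_supp ε n y (by omega)]
    ring
  · intro _ _; rfl

lemma Z_rec (ε : ℝ) (n : ℕ) (q : ℝ) (hq : q ≠ 0) :
    Z ε (n+1) q = (q^2+1)/(2*q) * Z ε n q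
      + ε * (q^2-1) * ∑ x ∈ Finset.Icc (-(n:ℤ)) (n:ℤ), P ε n x * ((x:ℝ) * q ^ (x-1)) := by
  have hA : ∑ x ∈ Finset.Icc (-(n:ℤ)-1) ((n:ℤ)+1),
        P ε n (x+1) * ((1/2 - ((x+1 : ℤ):ℝ)*ε) * q^((x+1)-1))
      = ∑ y ∈ Finset.Icc (-(n:ℤ)) (n:ℤ), P ε n y * ((1/2 - (y:ℝ)*ε) * q^(y-1)) :=
    shift_sum ε n 1 (by norm_num) (by norm_num) (fun y => (1/2 - (y:ℝ)*ε) * q^(y-1))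
  have hB : ∑ x ∈ Finset.Icc (-(n:ℤ)-1) ((n:ℤ)+1),
        P ε n (x+(-1)) * ((1/2 + ((x+(-1) : ℤ):ℝ)*ε) * q^((x+(-1))+1))
      = ∑ y ∈ Finset.Icc (-(n:ℤ)) (n:ℤ), P ε n y * ((1/2 + (y:ℝ)*ε) * q^(y+1)) :=
    shift_sum ε n (-1) (by norm_num) (by norm_num) (fun y => (1/2 + (y:ℝ)*ε) * q^(y+1))
  have hL : Z ε (n+1) q
      = ∑ x ∈ Finset.Icc (-(n:ℤ)-1) ((n:ℤ)+1),
          (P ε n (x+1) * ((1/2 - ((x+1 : ℤ):ℝ)*ε) * q^((x+1)-1))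
           + P ε n (x+(-1)) * ((1/2 + ((x+(-1) : ℤ):ℝ)*ε) * q^((x+(-1))+1))) := by
    rw [Z_eq_sum]
    have hcast : (-(((n:ℕ)+1 : ℕ):ℤ)) = -(n:ℤ)-1 := by push_cast; ring
    have hcast2 : ((((n:ℕ)+1 : ℕ)):ℤ) = (n:ℤ)+1 := by push_cast; ring
    rw [hcast, hcast2]
    refine Finset.sum_congr rfl fun x _ => ?_
    rw [P_succ]
    have e1 : x + 1 - 1 = x := by ring
    have e2 : x + (-1) + 1 = x := by ring
    rw [e1, e2]
    push_cast
    ring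
  rw [hL, Finset.sum_add_distrib, hA, hB, Z_eq_sum, Finset.mul_sum, Finset.mul_sum]
  simp only [← Finset.sum_add_distrib]
  refine Finset.sum_congr rfl fun y _ => ?_
  rw [zpow_sub_one₀ hq, zpow_add_one₀ hq]
  field_simp
  ring

/-- for `ε ≠ 0`, `Y_{n+1}(q) = (q² − 1) · Y_n'(q)` for every `q > 1`. -/
theorem Y_recurrence (ε : ℝ) (hε : ε ≠ 0) (n : ℕ) (q : ℝ) (hq : 1 < q) :
    Y ε (n + 1) q = (q ^ 2 - 1) * deriv (Y ε n) q := by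
  have hq0 : (0:ℝ) < q := lt_trans one_pos hq
  have hqne : q ≠ 0 := hq0.ne'
  have hq21 : (0:ℝ) < q^2 - 1 := by nlinarith
  have hq2ne : q^2 - 1 ≠ 0 := hq21.ne'
  have hA : HasDerivAt (fun x : ℝ => x ^ (-(1/(2*ε))))
      ((-(1/(2*ε))) * q ^ ((-(1/(2*ε))) - 1)) q :=
    Real.hasDerivAt_rpow_const (Or.inl hqne)
  have hBinner : HasDerivAt (fun x : ℝ => x^2 - 1) (2*q) q := by
    simpa using (hasDerivAt_pow 2 q).sub_const 1
  have hB : HasDerivAt (fun x : ℝ => (x^2-1) ^ (1/(2*ε)))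
      (((1/(2*ε)) * (q^2-1) ^ ((1/(2*ε)) - 1)) * (2*q)) q :=
    by have := (Real.hasDerivAt_rpow_const (x := q^2-1) (p := 1/(2*ε)) (Or.inl hq2ne)).comp q hBinner; exact this
  have hZd := Z_hasDeriv ε n q hqne
  set D := ∑ x ∈ Finset.Icc (-(n:ℤ)) (n:ℤ), P ε n x * ((x:ℝ) * q ^ (x-1)) with hD
  have hY' : HasDerivAt (Y ε n)
      ((ε ^ (-(n:ℤ)) * ((-(1/(2*ε))) * q ^ ((-(1/(2*ε))) - 1)) * ((q^2-1) ^ (1/(2*ε)))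
        + ε ^ (-(n:ℤ)) * q ^ (-(1/(2*ε))) * (((1/(2*ε)) * (q^2-1) ^ ((1/(2*ε)) - 1)) * (2*q)))
        * Z ε n q
       + (ε ^ (-(n:ℤ)) * q ^ (-(1/(2*ε))) * (q^2-1) ^ (1/(2*ε))) * D) q := by
    have : Y ε n = fun x : ℝ =>
        ε ^ (-(n:ℤ)) * x ^ (-(1/(2*ε))) * (x^2-1) ^ (1/(2*ε)) * Z ε n x := rfl
    rw [this]
    exact ((hA.const_mul (ε ^ (-(n:ℤ)))).mul hB).mul hZd
  rw [hY'.deriv]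
  show ε ^ (-((n+1 : ℕ)):ℤ) * q ^ (-(1/(2*ε))) * (q^2-1) ^ (1/(2*ε)) * Z ε (n+1) q = _
  rw [Z_rec ε n q hqne, show (-(((n+1):ℕ):ℤ)) = -(n:ℤ) + (-1) by push_cast; ring,
    zpow_add₀ hε, zpow_neg_one, Real.rpow_sub hq0, Real.rpow_sub hq21, Real.rpow_one,
    Real.rpow_one]
  rw [← hD]
  field_simp
  ring
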